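/- Let L = (I − P)D where P is a nonnegative square rational matrix with spectral radius < 1 and D is diagonal with positive integer entries r_a. Suppose L𝟙 may have negative entries. Then there exists a pointwise smallest integer vector y ≥ 𝟙 such that Ly ≥ 0: the set { y ∈ ℤ^A : y ≥ 𝟙, Ly ≥ 0 } is nonempty and closed under coordinatewise minimum. -/

import Mathlib

open Matrix

/-- The Laplacian `L = (I - P) D`. -/
noncomputable def Lmat {n : ℕ} (P : Matrix (Fin n) (Fin n) ℚ) (r : Fin n → ℤ) :
    Matrix (Fin n) (Fin n) ℚ :=
  (1 - P) * Matrix.diagonal fun i => (r i : ℚ)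

/-- The feasible set `{ y ∈ ℤ^n : y ≥ 1, L y ≥ 0 }`. -/
noncomputable def Feasible {n : ℕ} (P : Matrix (Fin n) (Fin n) ℚ) (r : Fin n → ℤ)
    (y : Fin n → ℤ) : Prop :=
  (∀ i, 1 ≤ y i) ∧ ∀ i, 0 ≤ (Lmat P r *ᵥ fun j => (y j : ℚ)) i

attribute [local instance] Matrix.linftyOpNormedAddCommGroup Matrix.linftyOpNormedRing
  Matrix.linftyOpNormedAlgebra

lemma Lmat_mulVec {n : ℕ} (P : Matrix (Fin n) (Fin n) ℚ) (r : Fin n → ℤ)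
    (v : Fin n → ℚ) (i : Fin n) :
    (Lmat P r *ᵥ v) i = (r i : ℚ) * v i - ∑ j, P i j * ((r j : ℚ) * v j) := by
  rw [Lmat, ← Matrix.mulVec_mulVec]
  have hd : Matrix.diagonal (fun i => (r i : ℚ)) *ᵥ v = fun x => (r x : ℚ) * v x := by
    funext x
    simp [Matrix.mulVec, dotProduct, Matrix.diagonal_apply, ite_mul, Finset.sum_ite_eq]
  rw [hd]
  simp [Matrix.mulVec, dotProduct, Matrix.sub_apply, Matrix.one_apply, sub_mul,
    Finset.sum_sub_distrib, ite_mul, Finset.sum_ite_eq]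

lemma mem_spectrum_iff_root {N : ℕ} (M : Matrix (Fin N) (Fin N) ℂ) (μ : ℂ) :
    μ ∈ spectrum ℂ M ↔ M.charpoly.IsRoot μ := by
  rw [spectrum.mem_iff, Matrix.isUnit_iff_isUnit_det, isUnit_iff_ne_zero, not_not,
    Polynomial.IsRoot, Matrix.charpoly, ← Polynomial.coe_evalRingHom, RingHom.map_det]
  congr! 2
  ext i j
  by_cases h : i = j <;>
    simp [h, Matrix.charmatrix_apply, Matrix.map_apply, Matrix.sub_apply,
      Matrix.diagonal_apply, Algebra.algebraMap_eq_smul_one, Matrix.smul_apply,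
      Matrix.one_apply]

lemma norm_pow_lt_one {N : ℕ} [NeZero N] (Q : Matrix (Fin N) (Fin N) ℂ)
    (h : ∀ μ ∈ spectrum ℂ Q, ‖μ‖₊ < 1) : ∃ k : ℕ, 1 ≤ k ∧ ‖Q ^ k‖₊ < 1 := by
  haveI : CompleteSpace (Matrix (Fin N) (Fin N) ℂ) :=
    FiniteDimensional.complete ℂ (Matrix (Fin N) (Fin N) ℂ)
  have hrad : spectralRadius ℂ Q < 1 := by
    have := spectrum.spectralRadius_lt_of_forall_lt Q (r := 1) h
    simpa using this
  have htends := spectrum.pow_nnnorm_pow_one_div_tendsto_nhds_spectralRadius Q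
  have hev : ∀ᶠ k : ℕ in Filter.atTop,
      (‖Q ^ k‖₊ : ENNReal) ^ (1 / (k : ℝ)) < 1 :=
    htends.eventually_lt_const hrad
  obtain ⟨k, hk1, hk⟩ := (hev.and (Filter.eventually_ge_atTop 1)).exists
  refine ⟨k, hk, ?_⟩
  have hkne : (k : ℝ) ≠ 0 := Nat.cast_ne_zero.mpr (by omega)
  have hlt : ((‖Q ^ k‖₊ : ENNReal) ^ (1 / (k : ℝ))) ^ (k : ℝ) < 1 :=
    ENNReal.rpow_lt_one hk1 (by positivity)
  rw [← ENNReal.rpow_mul, one_div, inv_mul_cancel₀ hkne, ENNReal.rpow_one] at hlt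
  exact_mod_cast hlt

lemma pow_entry_nonneg {n : ℕ} {P : Matrix (Fin n) (Fin n) ℚ} (hnn : ∀ i j, 0 ≤ P i j)
    (k : ℕ) : ∀ i j, 0 ≤ (P ^ k) i j := by
  induction k with
  | zero => intro i j; by_cases h : i = j <;> simp [h, Matrix.one_apply]
  | succ m ih =>
    intro i j
    rw [pow_succ, Matrix.mul_apply]
    exact Finset.sum_nonneg fun c _ => mul_nonneg (ih i c) (hnn c j)

lemma exists_feasible {n : ℕ} [NeZero n] (P : Matrix (Fin n) (Fin n) ℚ)
    (hnn : ∀ i j, 0 ≤ P i j)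
    (hspec : ∀ μ ∈ (P.map ((↑) : ℚ → ℂ)).charpoly.roots, ‖μ‖ < 1)
    (r : Fin n → ℤ) (hr : ∀ i, 0 < r i) : ∃ y : Fin n → ℤ, Feasible P r y := by
  -- Step 1: get k with all row sums of P^k < 1
  set Q := P.map ((↑) : ℚ → ℂ) with hQ
  have hspec' : ∀ μ ∈ spectrum ℂ Q, ‖μ‖₊ < 1 := by
    intro μ hμ
    rw [mem_spectrum_iff_root] at hμ
    have hne : Q.charpoly ≠ 0 := (Matrix.charpoly_monic Q).ne_zero
    have : μ ∈ Q.charpoly.roots := by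
      rw [Polynomial.mem_roots hne]; exact hμ
    have := hspec μ this
    rw [← NNReal.coe_lt_coe]
    simpa [coe_nnnorm] using this
  obtain ⟨k, hk1, hknorm⟩ := norm_pow_lt_one Q hspec'
  have hQk : Q ^ k = (P ^ k).map ((↑) : ℚ → ℂ) := by
    have : Q = (Rat.castHom ℂ).mapMatrix P := rfl
    rw [this, ← map_pow]; rfl
  -- row sums
  have hrow : ∀ i, ∑ j, (P ^ k) i j < 1 := by
    intro i
    have hsup : (∑ j, ‖(Q ^ k) i j‖₊) < 1 := by
      refine lt_of_le_of_lt ?_ hknorm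
      rw [Matrix.linfty_opNNNorm_def]
      exact Finset.le_sup (f := fun i => ∑ j, ‖(Q ^ k) i j‖₊) (Finset.mem_univ i)
    have : (∑ j, ‖(Q ^ k) i j‖ : ℝ) < 1 := by
      have := hsup
      rw [← NNReal.coe_lt_coe] at this
      simpa [NNReal.coe_sum, coe_nnnorm] using this
    have heq : ∀ j, ‖(Q ^ k) i j‖ = ((P ^ k) i j : ℝ) := by
      intro j
      rw [hQk]
      simp only [Matrix.map_apply]
      rw [Complex.norm_ratCast]
      exact abs_of_nonneg (by exact_mod_cast pow_entry_nonneg hnn k i j)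
    rw [Finset.sum_congr rfl fun j _ => heq j] at this
    exact_mod_cast this
  -- Step 2: the vector x
  set x : Fin n → ℚ := fun i => ∑ m ∈ Finset.range k, ((P ^ m) *ᵥ (fun _ => (1:ℚ))) i with hx
  have hmv : ∀ m (i : Fin n), ((P ^ m) *ᵥ (fun _ => (1:ℚ))) i = ∑ j, (P ^ m) i j := by
    intro m i; simp [Matrix.mulVec, dotProduct]
  have hmv0 : ∀ i : Fin n, ((P ^ 0) *ᵥ (fun _ => (1:ℚ))) i = 1 := by
    intro i
    rw [hmv]
    simp [Matrix.one_apply]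
  have hx1 : ∀ i, 1 ≤ x i := by
    intro i
    have h1 := Finset.single_le_sum (f := fun m => ((P ^ m) *ᵥ (fun _ => (1:ℚ))) i)
      (fun m _ => show (0:ℚ) ≤ ((P ^ m) *ᵥ (fun _ => (1:ℚ))) i by
        rw [hmv]
        exact Finset.sum_nonneg fun j _ => pow_entry_nonneg hnn _ i j)
      (Finset.mem_range.mpr (by omega : 0 < k))
    calc (1:ℚ) = ((P ^ 0) *ᵥ (fun _ => (1:ℚ))) i := (hmv0 i).symm
      _ ≤ _ := h1
  have hPx : ∀ i, (P *ᵥ x) i = x i - 1 + ∑ j, (P ^ k) i j := by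
    intro i
    have hstep : ∀ m, ((P ^ (m+1)) *ᵥ (fun _ => (1:ℚ))) i
        = ∑ j, P i j * (((P ^ m) *ᵥ (fun _ => (1:ℚ))) j) := by
      intro m
      rw [pow_succ', ← Matrix.mulVec_mulVec]
      simp [Matrix.mulVec, dotProduct]
    have h1 : (P *ᵥ x) i = ∑ m ∈ Finset.range k, ((P ^ (m+1)) *ᵥ (fun _ => (1:ℚ))) i := by
      rw [Finset.sum_congr rfl fun m _ => hstep m, Finset.sum_comm]
      simp only [Matrix.mulVec, dotProduct, hx, Finset.mul_sum]
    have h2 := Finset.sum_range_succ' (fun m => ((P ^ m) *ᵥ (fun _ => (1:ℚ))) i) k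
    rw [Finset.sum_range_succ] at h2
    rw [h1]
    have hxk : x i = ∑ m ∈ Finset.range k, ((P ^ m) *ᵥ (fun _ => (1:ℚ))) i := rfl
    have hk' : ((P ^ k) *ᵥ (fun _ => (1:ℚ))) i = ∑ j, (P ^ k) i j := hmv k i
    have h0 := hmv0 i
    linarith
  -- Step 3: the slack ε
  have hne : (Finset.univ : Finset (Fin n)).Nonempty := Finset.univ_nonempty
  set S : ℚ := Finset.univ.sup' hne (fun i => ∑ j, (P ^ k) i j) with hS
  have hSlt : S < 1 := by
    rw [hS, Finset.sup'_lt_iff]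
    exact fun i _ => hrow i
  set ε : ℚ := 1 - S with hε
  have hεpos : 0 < ε := by rw [hε]; linarith
  have hslack : ∀ i, (P *ᵥ x) i ≤ x i - ε := by
    intro i
    have hle : ∑ j, (P ^ k) i j ≤ S :=
      Finset.le_sup' (fun i => ∑ j, (P ^ k) i j) (Finset.mem_univ i)
    rw [hPx i, hε]
    linarith
  -- Step 4: choose M and y
  set C : ℚ := ∑ i, ∑ j, P i j * (r j : ℚ) with hCdef
  have hC0 : 0 ≤ C :=
    Finset.sum_nonneg fun i _ => Finset.sum_nonneg fun j _ =>
      mul_nonneg (hnn i j) (by exact_mod_cast (hr j).le)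
  set M : ℚ := (1 + C) / ε with hMdef
  have hMε : M * ε = 1 + C := div_mul_cancel₀ _ hεpos.ne'
  have hMpos : 0 < M := div_pos (by linarith) hεpos
  refine ⟨fun i => ⌈M * x i / (r i : ℚ)⌉, fun i => ?_, fun i => ?_⟩
  · have hri : (0:ℚ) < (r i : ℚ) := by exact_mod_cast hr i
    have hxi : 0 < x i := lt_of_lt_of_le one_pos (hx1 i)
    exact Int.ceil_pos.mpr (div_pos (mul_pos hMpos hxi) hri)
  · rw [Lmat_mulVec]
    have hri : (0:ℚ) < (r i : ℚ) := by exact_mod_cast hr i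
    have hyi : M * x i ≤ (r i : ℚ) * ((⌈M * x i / (r i : ℚ)⌉ : ℤ) : ℚ) := by
      have hle := Int.le_ceil (M * x i / (r i : ℚ))
      have := mul_le_mul_of_nonneg_left hle hri.le
      calc M * x i = (r i : ℚ) * (M * x i / (r i : ℚ)) := by field_simp
        _ ≤ _ := this
    have hyj : ∀ j, (r j : ℚ) * ((⌈M * x j / (r j : ℚ)⌉ : ℤ) : ℚ) ≤ M * x j + (r j : ℚ) := by
      intro j
      have hrj : (0:ℚ) < (r j : ℚ) := by exact_mod_cast hr j
      have hle := (Int.ceil_lt_add_one (M * x j / (r j : ℚ))).le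
      have := mul_le_mul_of_nonneg_left hle hrj.le
      calc (r j : ℚ) * ((⌈M * x j / (r j : ℚ)⌉ : ℤ) : ℚ) ≤
          (r j : ℚ) * (M * x j / (r j : ℚ) + 1) := this
        _ = M * x j + (r j : ℚ) := by field_simp
    have hsum : ∑ j, P i j * ((r j : ℚ) * ((⌈M * x j / (r j : ℚ)⌉ : ℤ) : ℚ))
        ≤ ∑ j, P i j * (M * x j + (r j : ℚ)) :=
      Finset.sum_le_sum fun j _ => mul_le_mul_of_nonneg_left (hyj j) (hnn i j)
    have hsplit : ∑ j, P i j * (M * x j + (r j : ℚ))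
        = M * (P *ᵥ x) i + ∑ j, P i j * (r j : ℚ) := by
      simp only [Matrix.mulVec, dotProduct, mul_add, Finset.sum_add_distrib,
        Finset.mul_sum]
      congr 1
      exact Finset.sum_congr rfl fun j _ => by ring
    have hrowC : ∑ j, P i j * (r j : ℚ) ≤ C :=
      Finset.single_le_sum (f := fun i => ∑ j, P i j * (r j : ℚ))
        (fun i _ => Finset.sum_nonneg fun j _ =>
          mul_nonneg (hnn i j) (by exact_mod_cast (hr j).le))
        (Finset.mem_univ i)
    have hMx : M * (P *ᵥ x) i ≤ M * (x i - ε) :=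
      mul_le_mul_of_nonneg_left (hslack i) hMpos.le
    have := hMε
    linarith

lemma feasible_min {n : ℕ} {P : Matrix (Fin n) (Fin n) ℚ} (hnn : ∀ i j, 0 ≤ P i j)
    {r : Fin n → ℤ} (hr : ∀ i, 0 < r i) {y y' : Fin n → ℤ}
    (h : Feasible P r y) (h' : Feasible P r y') :
    Feasible P r (fun i => min (y i) (y' i)) := by
  obtain ⟨h1, h2⟩ := h
  obtain ⟨h1', h2'⟩ := h'
  refine ⟨fun i => le_min (h1 i) (h1' i), fun i => ?_⟩
  rw [Lmat_mulVec]
  have key : ∀ (z : Fin n → ℤ), (∀ j, min (y j) (y' j) ≤ z j) →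
      ((r i : ℚ) * (z i : ℚ) - ∑ j, P i j * ((r j : ℚ) * (z j : ℚ)) ≥ 0) →
      min (y i) (y' i) = z i →
      0 ≤ (r i : ℚ) * ((min (y i) (y' i) : ℤ) : ℚ) -
        ∑ j, P i j * ((r j : ℚ) * ((min (y j) (y' j) : ℤ) : ℚ)) := by
    intro z hz hz2 hzi
    rw [hzi]
    refine le_trans hz2 ?_
    gcongr with j _
    all_goals first
      | exact hnn i j
      | exact_mod_cast (hr j).le
      | exact_mod_cast hz j
  rcases le_total (y i) (y' i) with hle | hle
  · refine key y (fun j => min_le_left _ _) ?_ (min_eq_left hle)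
    have := h2 i; rw [Lmat_mulVec] at this; linarith
  · refine key y' (fun j => min_le_right _ _) ?_ (min_eq_right hle)
    have := h2' i; rw [Lmat_mulVec] at this; linarith

lemma feasible_inf' {n : ℕ} {P : Matrix (Fin n) (Fin n) ℚ} (hnn : ∀ i j, 0 ≤ P i j)
    {r : Fin n → ℤ} (hr : ∀ i, 0 < r i) (s : Finset (Fin n)) (hs : s.Nonempty)
    (g : Fin n → (Fin n → ℤ)) (hg : ∀ j ∈ s, Feasible P r (g j)) :
    Feasible P r (fun i => s.inf' hs (fun j => g j i)) := by
  induction hs using Finset.Nonempty.cons_induction with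
  | singleton a => simpa using hg a (by simp)
  | cons a s ha hs ih =>
    have h1 : Feasible P r (fun i => s.inf' hs (fun j => g j i)) :=
      ih (fun j hj => hg j (Finset.mem_cons_of_mem hj))
    have h2 : Feasible P r (g a) := hg a (Finset.mem_cons_self a s)
    have := feasible_min hnn hr h2 h1
    convert this using 1
    funext i
    rw [Finset.inf'_cons]

theorem stmt16 {n : ℕ} (P : Matrix (Fin n) (Fin n) ℚ) (hnn : ∀ i j, 0 ≤ P i j)
    (hspec : ∀ μ ∈ (P.map ((↑) : ℚ → ℂ)).charpoly.roots, ‖μ‖ < 1)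
    (r : Fin n → ℤ) (hr : ∀ i, 0 < r i) :
    (∃ y : Fin n → ℤ, Feasible P r y) ∧
    (∀ y y' : Fin n → ℤ, Feasible P r y → Feasible P r y' →
        Feasible P r (fun i => min (y i) (y' i))) ∧
    (∃ y₀ : Fin n → ℤ, Feasible P r y₀ ∧
        ∀ y : Fin n → ℤ, Feasible P r y → ∀ i, y₀ i ≤ y i) := by
  rcases Nat.eq_zero_or_pos n with h0 | hpos
  · subst h0
    have hfe : Feasible P r (fun _ => 1) := ⟨fun i => Fin.elim0 i, fun i => Fin.elim0 i⟩
    exact ⟨⟨_, hfe⟩, fun y y' h h' => feasible_min hnn hr h h',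
      ⟨_, hfe, fun y hy i => Fin.elim0 i⟩⟩
  haveI : NeZero n := ⟨hpos.ne'⟩
  obtain ⟨yex, hyex⟩ := exists_feasible P hnn hspec r hr
  refine ⟨⟨yex, hyex⟩, fun y y' h h' => feasible_min hnn hr h h', ?_⟩
  have hlb : ∀ i : Fin n, ∃ m : ℤ, (∃ y, Feasible P r y ∧ y i = m) ∧
      ∀ z : ℤ, (∃ y, Feasible P r y ∧ y i = z) → m ≤ z := fun i =>
    Int.exists_least_of_bdd
      ⟨1, fun z ⟨y, hy, hz⟩ => hz ▸ hy.1 i⟩ ⟨yex i, yex, hyex, rfl⟩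
  choose m hm hmin using hlb
  choose g hg1 hg2 using hm
  have hne : (Finset.univ : Finset (Fin n)).Nonempty := Finset.univ_nonempty
  refine ⟨fun i => Finset.univ.inf' hne (fun j => g j i),
    feasible_inf' hnn hr Finset.univ hne g (fun j _ => hg1 j), ?_⟩
  intro y hy i
  have h1 : Finset.univ.inf' hne (fun j => g j i) ≤ g i i :=
    Finset.inf'_le _ (Finset.mem_univ i)
  have h2 : m i ≤ y i := hmin i (y i) ⟨y, hy, rfl⟩
  rw [hg2 i] at h1
  exact le_trans h1 h2
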